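/- Relaxed top-k efficiency of top-k Shapley values: let N be a finite nonempty set and f : 2^N → ℝ a monotone submodular characteristic function with f(∅) = 0, and let φ be the top-k Shapley values of the game (N, f). Then for every 0 ≤ k ≤ |N|, (1 - 1/e) · max_{S ⊆ N, |S| = k} f(S) ≤ ∑_{i=|N|-k+1}^{|N|} φ_{(i)}, where φ_{(1)} ≤ ⋯ ≤ φ_{(|N|)} is the order statistic of φ; i.e. the sum of the k largest top-k Shapley values is at least (1 - 1/e) times the maximal value of any coalition of size k. -/

import Mathlib

open Finset

open Finset

/-- The set of the first `k` players chosen by the ordering `σ`. -/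
def prefixSet {N : Type*} [Fintype N] [DecidableEq N]
    (σ : Fin (Fintype.card N) ≃ N) (k : ℕ) : Finset N :=
  (Finset.univ.filter (fun j : Fin (Fintype.card N) => (j : ℕ) < k)).image σ

/-- `(σ, φ)` is top-k Shapley data for `f`: `σ` orders the players so that each successive
player maximizes the marginal gain of `f` over the set of previously chosen players, and
`φ` assigns to each chosen player exactly that marginal gain (ties resolved arbitrarily). -/
def IsTopkShapley {N : Type*} [Fintype N] [DecidableEq N]
    (f : Finset N → ℝ) (σ : Fin (Fintype.card N) ≃ N) (φ : N → ℝ) : Prop :=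
  ∀ k : Fin (Fintype.card N),
    (∀ i : N, i ∉ prefixSet σ (k : ℕ) →
      f (insert i (prefixSet σ (k : ℕ))) ≤ f (insert (σ k) (prefixSet σ (k : ℕ)))) ∧
    φ (σ k) = f (insert (σ k) (prefixSet σ (k : ℕ))) - f (prefixSet σ (k : ℕ))

/-- A set function is submodular if for every `X` and distinct `x₁, x₂ ∉ X`,
`f (X ∪ {x₁}) + f (X ∪ {x₂}) ≥ f (X ∪ {x₁, x₂}) + f X`. -/
def Submodular {N : Type*} [DecidableEq N] (f : Finset N → ℝ) : Prop :=
  ∀ X : Finset N, ∀ x₁ x₂ : N, x₁ ∉ X → x₂ ∉ X → x₁ ≠ x₂ →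
    f (insert x₁ (insert x₂ X)) + f X ≤ f (insert x₁ X) + f (insert x₂ X)

/-- Sum of the `k` largest values of `φ` over a finite type: sort the multiset of values in
increasing order and sum the first `k` entries of the reversed (decreasing) list. -/
noncomputable def sumTopK {N : Type*} [Fintype N] (φ : N → ℝ) (k : ℕ) : ℝ :=
  ((((Finset.univ.val.map φ).sort (· ≤ ·)).reverse.take k)).sum

/- ### Auxiliary lemmas -/

lemma dimin {N : Type*} [DecidableEq N] {f : Finset N → ℝ} (hsub : Submodular f)
    (X : Finset N) (a : N) (ha : a ∉ X) :
    ∀ D : Finset N, a ∉ D → f (insert a (X ∪ D)) + f X ≤ f (insert a X) + f (X ∪ D) := by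
  intro D
  induction D using Finset.induction_on with
  | empty => simp
  | @insert d D hd ih =>
    intro haD
    have ha' : a ∉ D := fun h => haD (mem_insert_of_mem h)
    have had : a ≠ d := fun h => haD (h ▸ mem_insert_self d D)
    by_cases hdXD : d ∈ X ∪ D
    · have : X ∪ insert d D = X ∪ D := by
        rw [Finset.union_insert, Finset.insert_eq_self.mpr hdXD]
      rw [this]; exact ih ha'
    · have h1 : X ∪ insert d D = insert d (X ∪ D) := by rw [Finset.union_insert]
      have haXD : a ∉ X ∪ D := by simp [ha, ha']
      have h2 := hsub (X ∪ D) a d haXD hdXD had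
      have h3 := ih ha'
      rw [h1]; linarith

lemma dimin' {N : Type*} [DecidableEq N] {f : Finset N → ℝ} (hsub : Submodular f)
    {X Y : Finset N} {a : N} (hXY : X ⊆ Y) (ha : a ∉ Y) :
    f (insert a Y) - f Y ≤ f (insert a X) - f X := by
  have h := dimin hsub X a (fun h => ha (hXY h)) (Y \ X) (fun h => ha (mem_sdiff.mp h).1)
  rw [Finset.union_sdiff_of_subset hXY] at h
  linarith

lemma marg_sum {N : Type*} [DecidableEq N] {f : Finset N → ℝ} (hsub : Submodular f)
    (X : Finset N) : ∀ A : Finset N,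
    f (A ∪ X) - f X ≤ ∑ i ∈ A \ X, (f (insert i X) - f X) := by
  intro A
  induction A using Finset.induction_on with
  | empty => simp
  | @insert a A haA ih =>
    by_cases haX : a ∈ X
    · have h1 : insert a A ∪ X = A ∪ X := by
        rw [Finset.insert_union, Finset.insert_eq_self.mpr (mem_union_right A haX)]
      have h2 : insert a A \ X = A \ X := by
        rw [Finset.insert_sdiff_of_mem A haX]
      rw [h1, h2]; exact ih
    · have h2 : insert a A \ X = insert a (A \ X) := by
        rw [Finset.insert_sdiff_of_notMem A haX]
      have haAX : a ∉ A \ X := fun h => haA (mem_sdiff.mp h).1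
      rw [h2, Finset.sum_insert haAX, Finset.insert_union]
      have haAX' : a ∉ A ∪ X := by simp [haA, haX]
      have h3 := dimin' hsub (X := X) (Y := A ∪ X) (Finset.subset_union_right) haAX'
      linarith

section PrefixLemmas

variable {N : Type*} [Fintype N] [DecidableEq N] (σ : Fin (Fintype.card N) ≃ N)

lemma mem_prefixSet {i : N} {m : ℕ} : i ∈ prefixSet σ m ↔ (σ.symm i : ℕ) < m := by
  simp only [prefixSet, mem_image, mem_filter, mem_univ, true_and]
  constructor
  · rintro ⟨j, hj, rfl⟩; simpa using hj
  · intro h; exact ⟨σ.symm i, h, by simp⟩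

lemma prefixSet_zero : prefixSet σ 0 = ∅ := by
  ext i; simp [mem_prefixSet]

lemma prefixSet_mono {m m' : ℕ} (h : m ≤ m') : prefixSet σ m ⊆ prefixSet σ m' := by
  intro i hi; rw [mem_prefixSet] at *; omega

lemma not_mem_prefixSet_self {m : ℕ} (h : m < Fintype.card N) :
    σ ⟨m, h⟩ ∉ prefixSet σ m := by
  rw [mem_prefixSet]; simp

lemma prefixSet_succ {m : ℕ} (h : m < Fintype.card N) :
    prefixSet σ (m + 1) = insert (σ ⟨m, h⟩) (prefixSet σ m) := by
  ext i
  rw [mem_prefixSet, mem_insert, mem_prefixSet]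
  constructor
  · intro hi
    rcases Nat.lt_succ_iff_lt_or_eq.mp hi with h' | h'
    · exact Or.inr h'
    · left
      have : σ.symm i = ⟨m, h⟩ := Fin.ext h'
      rw [← this]; simp
  · rintro (rfl | h')
    · simp
    · omega

end PrefixLemmas

lemma sumTopK_eq {N : Type*} [Fintype N] [DecidableEq N] (φ : N → ℝ)
    (σ : Fin (Fintype.card N) ≃ N)
    (hanti : ∀ i j : Fin (Fintype.card N), i < j → φ (σ j) ≤ φ (σ i)) (k : ℕ) :
    sumTopK φ k = ∑ j ∈ Finset.univ.filter (fun j : Fin (Fintype.card N) => (j : ℕ) < k),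
      φ (σ j) := by
  set L : List ℝ := List.ofFn (fun j : Fin (Fintype.card N) => φ (σ j)) with hL
  have hmult : (Finset.univ.val.map φ) = (L : Multiset ℝ) := by
    have h1 : (Finset.univ : Finset N) = Finset.univ.map σ.toEmbedding :=
      (Finset.map_univ_equiv σ).symm
    rw [h1]
    simp only [Finset.map_val, Multiset.map_map]
    rw [Fin.univ_def]
    rw [hL, List.ofFn_eq_map]
    simp [Function.comp]
  have hsortedL : L.Pairwise (· ≥ ·) := by
    rw [hL, List.pairwise_ofFn]
    intro i j hij
    exact hanti i j hij
  have hrev : L.reverse.Pairwise (· ≤ ·) := by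
    exact List.pairwise_reverse.mpr hsortedL
  have hsort : ((Finset.univ.val.map φ).sort (· ≤ ·)) = L.reverse := by
    apply List.Perm.eq_of_pairwise' (Multiset.pairwise_sort _ _) hrev
    apply Multiset.coe_eq_coe.mp
    rw [Multiset.sort_eq, hmult]
    exact Multiset.coe_reverse L ▸ rfl
  rw [sumTopK, hsort, List.reverse_reverse, hL, List.sum_take_ofFn]

/-- **Relaxed top-k efficiency of top-k Shapley values.** If `f` is monotone and submodular
with `f ∅ = 0` and `φ` are the top-k Shapley values of `(N, f)`, then for every
`0 ≤ k ≤ |N|` and every coalition `S` of size `k`,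
`(1 - 1/e) * f S ≤` the sum of the `k` largest values of `φ`. -/
theorem topkShapley_relaxed_topk_efficiency
    {N : Type*} [Fintype N] [Nonempty N] [DecidableEq N]
    (f : Finset N → ℝ) (hf : f ∅ = 0)
    (hmono : ∀ S T : Finset N, S ⊆ T → f S ≤ f T) (hsub : Submodular f)
    (σ : Fin (Fintype.card N) ≃ N) (φ : N → ℝ) (hσφ : IsTopkShapley f σ φ) :
    ∀ k ≤ Fintype.card N, ∀ S : Finset N, S.card = k →
      (1 - 1 / Real.exp 1) * f S ≤ sumTopK φ k := by
  intro k hk S hS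
  rcases Nat.eq_zero_or_pos k with rfl | hk0
  · have hSe : S = ∅ := Finset.card_eq_zero.mp hS
    subst hSe
    simp [hf, sumTopK]
  -- marginal value formula
  have hφeq : ∀ jf : Fin (Fintype.card N),
      φ (σ jf) = f (prefixSet σ ((jf : ℕ) + 1)) - f (prefixSet σ (jf : ℕ)) := by
    intro jf
    rw [(hσφ jf).2, prefixSet_succ σ jf.isLt]
  -- nonincreasing greedy marginals
  have hadj : ∀ m : ℕ, ∀ h1 : m + 1 < Fintype.card N,
      φ (σ ⟨m + 1, h1⟩) ≤ φ (σ ⟨m, by omega⟩) := by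
    intro m h1
    have hmn : m < Fintype.card N := by omega
    have hnm1 : σ ⟨m + 1, h1⟩ ∉ prefixSet σ (m + 1) := not_mem_prefixSet_self σ h1
    have hnm0 : σ ⟨m + 1, h1⟩ ∉ prefixSet σ m :=
      fun h => hnm1 (prefixSet_mono σ (Nat.le_succ m) h)
    have hd := dimin' hsub (prefixSet_mono σ (Nat.le_succ m)) hnm1
    have hmax : f (insert (σ ⟨m + 1, h1⟩) (prefixSet σ m)) ≤
        f (insert (σ ⟨m, hmn⟩) (prefixSet σ m)) := (hσφ ⟨m, hmn⟩).1 (σ ⟨m + 1, h1⟩) hnm0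
    have e1 : φ (σ ⟨m + 1, h1⟩) = f (insert (σ ⟨m + 1, h1⟩) (prefixSet σ (m + 1))) -
        f (prefixSet σ (m + 1)) := (hσφ ⟨m + 1, h1⟩).2
    have e2 : φ (σ ⟨m, hmn⟩) = f (insert (σ ⟨m, hmn⟩) (prefixSet σ m)) -
        f (prefixSet σ m) := (hσφ ⟨m, hmn⟩).2
    have egoal : φ (σ (⟨m, by omega⟩ : Fin (Fintype.card N))) = φ (σ ⟨m, hmn⟩) := rfl
    rw [egoal, e1, e2]
    linarith
  have hanti : ∀ i j : Fin (Fintype.card N), i < j → φ (σ j) ≤ φ (σ i) := by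
    have key : ∀ m : ℕ, ∀ h : m < Fintype.card N, ∀ l, ∀ hl : l ≤ m,
        φ (σ ⟨m, h⟩) ≤ φ (σ ⟨l, by omega⟩) := by
      intro m
      induction m with
      | zero => intro h l hl; interval_cases l; exact le_refl _
      | succ m ih =>
        intro h l hl
        rcases Nat.eq_or_lt_of_le hl with rfl | hlt
        · exact le_refl _
        · have hl' : l ≤ m := by omega
          have hmn : m < Fintype.card N := by omega
          exact le_trans (hadj m h) (ih hmn l hl')
    intro i j hij
    have := key (j : ℕ) j.isLt (i : ℕ) (by omega)
    simpa [Fin.eta] using this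
  rw [sumTopK_eq φ σ hanti k]
  -- telescoping sum
  have htel : ∑ j ∈ Finset.univ.filter (fun j : Fin (Fintype.card N) => (j : ℕ) < k),
      φ (σ j) = f (prefixSet σ k) := by
    have h1 : ∀ j ∈ Finset.univ.filter (fun j : Fin (Fintype.card N) => (j : ℕ) < k),
        φ (σ j) = f (prefixSet σ ((j : ℕ) + 1)) - f (prefixSet σ (j : ℕ)) :=
      fun j _ => hφeq j
    rw [Finset.sum_congr rfl h1, Finset.sum_filter,
      Fin.sum_univ_eq_sum_range
        (fun j => if j < k then f (prefixSet σ (j + 1)) - f (prefixSet σ j) else 0)]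
    have h2 : ∑ j ∈ Finset.range (Fintype.card N),
        (if j < k then f (prefixSet σ (j + 1)) - f (prefixSet σ j) else 0)
        = ∑ j ∈ Finset.range k, (f (prefixSet σ (j + 1)) - f (prefixSet σ j)) := by
      rw [← Finset.sum_filter]
      apply Finset.sum_congr _ (fun _ _ => rfl)
      ext j; simp only [Finset.mem_filter, Finset.mem_range]; omega
    rw [h2, Finset.sum_range_sub (fun j => f (prefixSet σ j)) k, prefixSet_zero, hf, sub_zero]
  rw [htel]
  -- greedy (1 - 1/e) analysis
  have hS0 : 0 ≤ f S := hf ▸ hmono ∅ S (empty_subset S)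
  have hkpos : (0 : ℝ) < (k : ℝ) := by exact_mod_cast hk0
  have hc0 : (0 : ℝ) ≤ 1 - 1 / (k : ℝ) := by
    rw [sub_nonneg, div_le_one hkpos]
    exact_mod_cast hk0
  have hstep : ∀ m < k, f S - f (prefixSet σ (m + 1)) ≤
      (1 - 1 / (k : ℝ)) * (f S - f (prefixSet σ m)) := by
    intro m hm
    have hmn : m < Fintype.card N := lt_of_lt_of_le hm hk
    have hsucc : f (prefixSet σ (m + 1)) = f (insert (σ ⟨m, hmn⟩) (prefixSet σ m)) := by
      rw [prefixSet_succ σ hmn]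
    have hM : ∀ i ∈ S \ prefixSet σ m, f (insert i (prefixSet σ m)) - f (prefixSet σ m) ≤
        f (prefixSet σ (m + 1)) - f (prefixSet σ m) := by
      intro i hi
      have hiP : i ∉ prefixSet σ m := (mem_sdiff.mp hi).2
      have := (hσφ ⟨m, hmn⟩).1 i hiP
      rw [hsucc]
      simp only at this
      linarith
    have h1 : f S ≤ f (S ∪ prefixSet σ m) := hmono _ _ Finset.subset_union_left
    have h2 := marg_sum hsub (prefixSet σ m) S
    have h3 : ∑ i ∈ S \ prefixSet σ m, (f (insert i (prefixSet σ m)) - f (prefixSet σ m)) ≤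
        ((S \ prefixSet σ m).card : ℝ) *
          (f (prefixSet σ (m + 1)) - f (prefixSet σ m)) := by
      calc ∑ i ∈ S \ prefixSet σ m, (f (insert i (prefixSet σ m)) - f (prefixSet σ m))
          ≤ ∑ _i ∈ S \ prefixSet σ m,
            (f (prefixSet σ (m + 1)) - f (prefixSet σ m)) := Finset.sum_le_sum hM
        _ = ((S \ prefixSet σ m).card : ℝ) *
            (f (prefixSet σ (m + 1)) - f (prefixSet σ m)) := by
            rw [Finset.sum_const, nsmul_eq_mul]
    have hMnn : 0 ≤ f (prefixSet σ (m + 1)) - f (prefixSet σ m) := by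
      have := hmono _ _ (prefixSet_mono σ (Nat.le_succ m))
      linarith
    have hcard : ((S \ prefixSet σ m).card : ℝ) ≤ (k : ℝ) := by
      have h := Finset.card_le_card (Finset.sdiff_subset (s := S) (t := prefixSet σ m))
      rw [hS] at h
      exact_mod_cast h
    have h4 : f S - f (prefixSet σ m) ≤
        (k : ℝ) * (f (prefixSet σ (m + 1)) - f (prefixSet σ m)) := by
      have h5 := mul_le_mul_of_nonneg_right hcard hMnn
      linarith
    have hrw : (1 - 1 / (k : ℝ)) = ((k : ℝ) - 1) / (k : ℝ) := by field_simp
    rw [hrw, div_mul_eq_mul_div, le_div_iff₀ hkpos]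
    nlinarith [h4]
  have hiter : ∀ m ≤ k, f S - f (prefixSet σ m) ≤ (1 - 1 / (k : ℝ)) ^ m * f S := by
    intro m
    induction m with
    | zero =>
      intro _
      rw [prefixSet_zero, hf]
      simp
    | succ m ih =>
      intro h
      have h1 := ih (by omega)
      have h2 := hstep m (by omega)
      calc f S - f (prefixSet σ (m + 1)) ≤ (1 - 1 / (k : ℝ)) * (f S - f (prefixSet σ m)) := h2
        _ ≤ (1 - 1 / (k : ℝ)) * ((1 - 1 / (k : ℝ)) ^ m * f S) :=
            mul_le_mul_of_nonneg_left h1 hc0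
        _ = (1 - 1 / (k : ℝ)) ^ (m + 1) * f S := by ring
  have hfinal := hiter k le_rfl
  have hexp : (1 - 1 / (k : ℝ)) ^ k ≤ 1 / Real.exp 1 := by
    have h1 : 1 - 1 / (k : ℝ) ≤ Real.exp (-(1 / (k : ℝ))) := by
      have := Real.add_one_le_exp (-(1 / (k : ℝ)))
      linarith
    calc (1 - 1 / (k : ℝ)) ^ k ≤ (Real.exp (-(1 / (k : ℝ)))) ^ k := pow_le_pow_left₀ hc0 h1 k
      _ = Real.exp ((k : ℝ) * (-(1 / (k : ℝ)))) := (Real.exp_nat_mul _ k).symm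
      _ = Real.exp (-1) := by
          congr 1
          field_simp
      _ = 1 / Real.exp 1 := by rw [Real.exp_neg, one_div]
  nlinarith [mul_le_mul_of_nonneg_right hexp hS0]
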